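/- arXiv:2005.04405 — 5 statements merged into one kernel-verified Lean document; each statement's English description precedes it below -/
import Mathlib

section
/- Let a < b, σ2 > 0, σ1 > 0, and σ3 ∈ ℝ. For ψ(x) = (x−a)^{σ2−1} (b−x)^{σ3−1} and x ∈ (a,b), the left Riemann–Liouville integral satisfies (I_a^{σ1} ψ)(x) = [(b−a)^{σ3−1} Γ(σ2)/Γ(σ1+σ2)] · (x−a)^{σ1+σ2−1} · ₂F₁(1−σ3, σ2, σ1+σ2; (x−a)/(b−a)), where ₂F₁ is the Gauss hypergeometric function. -/
open MeasureTheory Real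

/-- Left Riemann–Liouville fractional integral of order `σ` with base point `a`. -/
noncomputable def leftRL (a σ : ℝ) (ψ : ℝ → ℝ) : ℝ → ℝ :=
  fun x => (1 / Real.Gamma σ) * ∫ s in a..x, (x - s) ^ (σ - 1) * ψ s

/-- Gauss hypergeometric function `₂F₁(α, β, γ; z)` via Euler's integral
representation, valid for `0 < β < γ`. -/
noncomputable def hyp2F1 (α β γ z : ℝ) : ℝ :=
  (Real.Gamma γ / (Real.Gamma β * Real.Gamma (γ - β))) *
    ∫ t in (0:ℝ)..1, t ^ (β - 1) * (1 - t) ^ (γ - β - 1) * (1 - z * t) ^ (-α)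

theorem leftRL_power_weight (a b σ1 σ2 σ3 : ℝ) (hab : a < b)
    (hσ1 : 0 < σ1) (hσ2 : 0 < σ2) (x : ℝ) (hx : x ∈ Set.Ioo a b) :
    leftRL a σ1 (fun s => (s - a) ^ (σ2 - 1) * (b - s) ^ (σ3 - 1)) x =
      ((b - a) ^ (σ3 - 1) * Real.Gamma σ2 / Real.Gamma (σ1 + σ2)) *
        (x - a) ^ (σ1 + σ2 - 1) *
          hyp2F1 (1 - σ3) σ2 (σ1 + σ2) ((x - a) / (b - a)) := by
  obtain ⟨hax, hxb⟩ := hx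
  have hxa : 0 < x - a := by linarith
  have hba : 0 < b - a := by linarith
  set z := (x - a) / (b - a) with hz
  have hbz : (b - a) * z = x - a := by
    rw [hz]; field_simp
  -- substitution s = (x-a)*t + a
  have hsub := intervalIntegral.integral_comp_mul_add
    (a := (0:ℝ)) (b := 1)
    (f := fun s => (x - s) ^ (σ1 - 1) * ((s - a) ^ (σ2 - 1) * (b - s) ^ (σ3 - 1)))
    (ne_of_gt hxa) a
  rw [show (x - a) * 0 + a = a by ring, show (x - a) * 1 + a = x by ring] at hsub
  have hmain : (∫ s in a..x, (x - s) ^ (σ1 - 1) * ((s - a) ^ (σ2 - 1) * (b - s) ^ (σ3 - 1)))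
      = (x - a) * ∫ t in (0:ℝ)..1,
          (x - ((x - a) * t + a)) ^ (σ1 - 1) *
            (((x - a) * t + a - a) ^ (σ2 - 1) * (b - ((x - a) * t + a)) ^ (σ3 - 1)) := by
    rw [hsub, smul_eq_mul, ← mul_assoc, mul_inv_cancel₀ (ne_of_gt hxa), one_mul]
  have hcong : (∫ t in (0:ℝ)..1,
          (x - ((x - a) * t + a)) ^ (σ1 - 1) *
            (((x - a) * t + a - a) ^ (σ2 - 1) * (b - ((x - a) * t + a)) ^ (σ3 - 1)))
      = ((x - a) ^ (σ1 - 1) * ((x - a) ^ (σ2 - 1) * (b - a) ^ (σ3 - 1))) *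
          ∫ t in (0:ℝ)..1, t ^ (σ2 - 1) * (1 - t) ^ (σ1 - 1) * (1 - z * t) ^ (σ3 - 1) := by
    rw [← intervalIntegral.integral_const_mul]
    apply intervalIntegral.integral_congr
    intro t ht
    rw [Set.uIcc_of_le (by norm_num : (0:ℝ) ≤ 1)] at ht
    obtain ⟨ht0, ht1⟩ := ht
    have h1t : 0 ≤ 1 - t := by linarith
    have hz0 : 0 < z := div_pos hxa hba
    have hz1 : z < 1 := (div_lt_one hba).2 (by linarith)
    have hzt : 0 ≤ 1 - z * t := by nlinarith
    simp only
    rw [show x - ((x - a) * t + a) = (x - a) * (1 - t) by ring,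
        show (x - a) * t + a - a = (x - a) * t by ring,
        show b - ((x - a) * t + a) = (b - a) * (1 - z * t) by
          rw [mul_sub, mul_one, ← mul_assoc, hbz]; ring,
        Real.mul_rpow hxa.le h1t, Real.mul_rpow hxa.le ht0, Real.mul_rpow hba.le hzt]
    ring
  have hΓ1 : 0 < Real.Gamma σ1 := Real.Gamma_pos_of_pos hσ1
  have hΓ2 : 0 < Real.Gamma σ2 := Real.Gamma_pos_of_pos hσ2
  have hΓ12 : 0 < Real.Gamma (σ1 + σ2) := Real.Gamma_pos_of_pos (by linarith)
  have hpow : (x - a) * ((x - a) ^ (σ1 - 1) * (x - a) ^ (σ2 - 1)) = (x - a) ^ (σ1 + σ2 - 1) := by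
    rw [← Real.rpow_add hxa, show σ1 + σ2 - 1 = (σ1 - 1 + (σ2 - 1)) + 1 by ring,
      Real.rpow_add_one (ne_of_gt hxa)]
    ring
  rw [leftRL, hyp2F1, hmain, hcong]
  rw [show σ1 + σ2 - σ2 = σ1 by ring, show -(1 - σ3) = σ3 - 1 by ring]
  rw [show ((b - a) ^ (σ3 - 1) * Real.Gamma σ2 / Real.Gamma (σ1 + σ2)) *
        (x - a) ^ (σ1 + σ2 - 1) *
        (Real.Gamma (σ1 + σ2) / (Real.Gamma σ2 * Real.Gamma σ1) *
          ∫ t in (0:ℝ)..1, t ^ (σ2 - 1) * (1 - t) ^ (σ1 - 1) * (1 - z * t) ^ (σ3 - 1))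
      = (1 / Real.Gamma σ1) * ((x - a) * ((x - a) ^ (σ1 - 1) * (x - a) ^ (σ2 - 1))) *
          ((b - a) ^ (σ3 - 1) *
            ∫ t in (0:ℝ)..1, t ^ (σ2 - 1) * (1 - t) ^ (σ1 - 1) * (1 - z * t) ^ (σ3 - 1)) by
    rw [hpow]; generalize (∫ t in (0:ℝ)..1, t ^ (σ2 - 1) * (1 - t) ^ (σ1 - 1) * (1 - z * t) ^ (σ3 - 1)) = I; field_simp]
  ring
end

section
/- Let 0 < t < 1 and γ1, γ2 > 0. Then there exists a unique pair of real numbers (p, q) with −1 < p < 0 and −1 < q < 0 satisfying p + q = −t and γ1·sin(qπ) = γ2·sin(pπ). -/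
open Real

lemma abel_sin_pos_aux {t : ℝ} (ht0 : 0 < t) (ht1 : t < 1) : 0 < Real.sin (t * π) := by
  apply Real.sin_pos_of_pos_of_lt_pi
  · exact mul_pos ht0 Real.pi_pos
  · nlinarith [Real.pi_pos]

lemma abel_uniq_aux {t x1 x2 : ℝ} (ht0 : 0 < t) (ht1 : t < 1)
    (h1 : 0 < x1) (h1' : x1 < t) (h2 : 0 < x2) (h2' : x2 < t)
    (heq : Real.sin (x1 * π) * Real.sin ((t - x2) * π)
         = Real.sin (x2 * π) * Real.sin ((t - x1) * π)) : x1 = x2 := by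
  have key : Real.sin (t * π) * Real.sin ((x1 - x2) * π) = 0 := by
    have e1 : (t - x2) * π = t * π - x2 * π := by ring
    have e2 : (t - x1) * π = t * π - x1 * π := by ring
    have e3 : (x1 - x2) * π = x1 * π - x2 * π := by ring
    rw [e1, e2] at heq
    rw [e3, Real.sin_sub]
    rw [Real.sin_sub, Real.sin_sub] at heq
    linear_combination heq
  have hst : Real.sin (t * π) ≠ 0 := ne_of_gt (abel_sin_pos_aux ht0 ht1)
  have hz : Real.sin ((x1 - x2) * π) = 0 := by
    rcases mul_eq_zero.mp key with h | h
    · exact absurd h hst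
    · exact h
  have hlt : (x1 - x2) * π < π := by nlinarith [Real.pi_pos]
  have hgt : -π < (x1 - x2) * π := by nlinarith [Real.pi_pos]
  have := (Real.sin_eq_zero_iff_of_lt_of_lt hgt hlt).mp hz
  have hpi : (π : ℝ) ≠ 0 := ne_of_gt Real.pi_pos
  have : x1 - x2 = 0 := by
    rcases mul_eq_zero.mp this with h | h
    · exact h
    · exact absurd h hpi
  linarith

theorem abel_exponents_exist_unique (t γ1 γ2 : ℝ)
    (ht0 : 0 < t) (ht1 : t < 1) (hγ1 : 0 < γ1) (hγ2 : 0 < γ2) :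
    ∃! pq : ℝ × ℝ,
      (-1 < pq.1 ∧ pq.1 < 0) ∧ (-1 < pq.2 ∧ pq.2 < 0) ∧
        pq.1 + pq.2 = -t ∧ γ1 * Real.sin (pq.2 * π) = γ2 * Real.sin (pq.1 * π) := by
  have hst : 0 < Real.sin (t * π) := abel_sin_pos_aux ht0 ht1
  set f : ℝ → ℝ := fun x => γ2 * Real.sin (x * π) - γ1 * Real.sin ((t - x) * π) with hf
  have hcont : ContinuousOn f (Set.Icc 0 t) := by
    apply Continuous.continuousOn
    fun_prop
  have hf0 : f 0 = -(γ1 * Real.sin (t * π)) := by simp [hf]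
  have hft : f t = γ2 * Real.sin (t * π) := by simp [hf]
  have hmem : (0 : ℝ) ∈ Set.Icc (f 0) (f t) := by
    rw [hf0, hft]
    constructor
    · nlinarith
    · nlinarith
  obtain ⟨x, hxmem, hfx⟩ := intermediate_value_Icc (le_of_lt ht0) hcont hmem
  have hx0 : 0 < x := by
    rcases lt_or_eq_of_le hxmem.1 with h | h
    · exact h
    · exfalso; rw [← h] at hfx; rw [hf0] at hfx; nlinarith
  have hxt : x < t := by
    rcases lt_or_eq_of_le hxmem.2 with h | h
    · exact h
    · exfalso; rw [h] at hfx; rw [hft] at hfx; nlinarith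
  have hxeq : γ2 * Real.sin (x * π) = γ1 * Real.sin ((t - x) * π) := by
    have : f x = 0 := hfx
    simp only [hf] at this
    linarith
  refine ⟨(-x, x - t), ⟨⟨show (-1:ℝ) < -x by linarith, show -x < (0:ℝ) by linarith⟩,
    ⟨show (-1:ℝ) < x - t by linarith, show x - t < (0:ℝ) by linarith⟩,
    show -x + (x - t) = -t by ring, ?_⟩, ?_⟩
  · show γ1 * Real.sin ((x - t) * π) = γ2 * Real.sin (-x * π)
    have e1 : (x - t) * π = -((t - x) * π) := by ring
    have e2 : -x * π = -(x * π) := by ring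
    rw [e1, e2, Real.sin_neg, Real.sin_neg]
    linarith
  · rintro ⟨p, q⟩ ⟨⟨hp1, hp2⟩, ⟨hq1, hq2⟩, hsum, heq⟩
    simp only at hp1 hp2 hq1 hq2 hsum heq
    set y : ℝ := -p with hy
    have hy0 : 0 < y := by rw [hy]; linarith
    have hyt : y < t := by rw [hy]; linarith
    have hq : q = -(t - y) := by rw [hy]; linarith
    have hyeq : γ2 * Real.sin (y * π) = γ1 * Real.sin ((t - y) * π) := by
      have e1 : q * π = -((t - y) * π) := by rw [hq]; ring
      have e2 : p * π = -(y * π) := by rw [hy]; ring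
      rw [e1, e2, Real.sin_neg, Real.sin_neg] at heq
      linarith
    have hcross : Real.sin (y * π) * Real.sin ((t - x) * π)
                = Real.sin (x * π) * Real.sin ((t - y) * π) := by
      have h1 : γ2 * (Real.sin (y * π) * Real.sin ((t - x) * π))
              = γ2 * (Real.sin (x * π) * Real.sin ((t - y) * π)) := by
        linear_combination Real.sin ((t - x) * π) * hyeq - Real.sin ((t - y) * π) * hxeq
      exact mul_left_cancel₀ (ne_of_gt hγ2) h1
    have hxy : y = x := abel_uniq_aux ht0 ht1 hy0 hyt hx0 hxt hcross
    have hp : p = -x := by rw [← hxy, hy]; ring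
    have hqv : q = x - t := by rw [hq, hxy]; ring
    simp [hp, hqv]
end

section
/- Let 0 < μ < 1, 0 < α, β < 1 with α + β = 1, and set A = α − β·cos(μπ), B = β·sin(μπ). Let θ ∈ [0, 2π) be defined by (A − iB)/(A + iB) = e^{iθ}. Then μ < θ/(2π) < 1. -/
open Real Complex

set_option maxHeartbeats 1000000

theorem theta_strictly_between (μ α β θ : ℝ)
    (hμ : 0 < μ ∧ μ < 1) (hα : 0 < α ∧ α < 1) (hβ : 0 < β ∧ β < 1)
    (hαβ : α + β = 1)
    (A : ℝ) (hA : A = α - β * Real.cos (μ * π))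
    (B : ℝ) (hB : B = β * Real.sin (μ * π))
    (hθ0 : 0 ≤ θ) (hθ2π : θ < 2 * π)
    (hθ : ((A : ℂ) - B * Complex.I) / ((A : ℂ) + B * Complex.I)
        = Complex.exp (θ * Complex.I)) :
    μ < θ / (2 * π) ∧ θ / (2 * π) < 1 := by
  obtain ⟨hμ0, hμ1⟩ := hμ
  obtain ⟨hα0, hα1⟩ := hα
  obtain ⟨hβ0, hβ1⟩ := hβ
  have hπ := Real.pi_pos
  have hs : 0 < Real.sin (μ * π) :=
    Real.sin_pos_of_pos_of_lt_pi (by positivity) (by nlinarith)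
  have hBpos : 0 < B := by rw [hB]; positivity
  set c := Real.cos (μ * π) with hc
  set s := Real.sin (μ * π) with hsdef
  clear_value c s
  have hsc : s ^ 2 + c ^ 2 = 1 := by
    rw [hsdef, hc]; exact Real.sin_sq_add_cos_sq _
  set w : ℂ := (A : ℂ) + B * Complex.I with hw
  clear_value w
  have hwim : w.im = B := by simp [hw]
  have hwre : w.re = A := by simp [hw]
  have hwne : w ≠ 0 := by
    intro h
    rw [h] at hwim
    simp at hwim
    linarith
  set φ := Complex.arg w with hφ
  set r := ‖w‖ with hr
  clear_value φ r
  have hrpos : 0 < r := by rw [hr]; exact norm_pos_iff.mpr hwne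
  have hr2 : r ^ 2 = A ^ 2 + B ^ 2 := by
    rw [hr, Complex.sq_norm, Complex.normSq_apply, hwre, hwim]; ring
  -- key inequality : A + r * c > 0
  have hid1 : A ^ 2 - (r * c) ^ 2 = s ^ 2 * α * (α - 2 * β * c) := by
    have h := hr2
    rw [hA, hB] at h
    rw [hA]
    linear_combination (-(c ^ 2)) * h + (-(α - β * c) ^ 2) * hsc
  have hkey : 0 < A + r * c := by
    rcases le_or_gt c 0 with hcle | hcgt
    · have hA0 : 0 < A := by
        rw [hA]; nlinarith [mul_nonpos_of_nonneg_of_nonpos hβ0.le hcle]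
      have hαc : 0 < α - 2 * β * c := by
        nlinarith [mul_nonpos_of_nonneg_of_nonpos hβ0.le hcle]
      have hpos : 0 < s ^ 2 * α * (α - 2 * β * c) := by positivity
      have hArc : 0 < A - r * c := by
        nlinarith [mul_nonpos_of_nonneg_of_nonpos hrpos.le hcle]
      nlinarith [hid1, hpos, hArc]
    · have hrc : 0 < r * c := mul_pos hrpos hcgt
      rcases le_or_gt (β * c - α) 0 with hba | hba
      · have : 0 ≤ A := by rw [hA]; linarith
        linarith
      · have hαc : α - 2 * β * c < 0 := by linarith
        have hneg : s ^ 2 * α * (α - 2 * β * c) < 0 := by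
          have h1 : 0 < s ^ 2 * α := by positivity
          exact mul_neg_of_pos_of_neg h1 hαc
        have hsq : A ^ 2 < (r * c) ^ 2 := by linarith
        have hrcA : 0 < r * c - A := by linarith
        nlinarith [hsq, hrcA]
  have hcosφ : Real.cos φ = A / r := by
    rw [hφ, Complex.cos_arg hwne, hwre, hr]
  have hφpos : 0 < φ := by
    rw [hφ]
    rcases lt_or_eq_of_le (Complex.arg_nonneg_iff.mpr (by rw [hwim]; linarith)) with h | h
    · exact h
    · exfalso
      have := Complex.arg_eq_zero_iff.mp h.symm
      rw [hwim] at this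
      linarith [this.2]
  have hφlepi : φ ≤ π := hφ ▸ Complex.arg_le_pi w
  have hμπ : 0 < π - μ * π := by nlinarith
  have hμπ2 : π - μ * π ≤ π := by nlinarith
  have hφlt : φ < π - μ * π := by
    have hcoslt : Real.cos (π - μ * π) < Real.cos φ := by
      rw [Real.cos_pi_sub, hcosφ, lt_div_iff₀ hrpos]
      nlinarith
    exact (Real.strictAntiOn_cos.lt_iff_gt ⟨by nlinarith, hμπ2⟩
      ⟨le_of_lt hφpos, hφlepi⟩).mp hcoslt
  -- now identify θ = 2π - 2φ
  have hwexp : (r : ℂ) * Complex.exp (φ * Complex.I) = w := by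
    rw [hr, hφ]; exact Complex.norm_mul_exp_arg_mul_I w
  have hconj : ((A : ℂ) - B * Complex.I) = (r : ℂ) * Complex.exp (-(φ * Complex.I)) := by
    have h := congrArg (starRingEnd ℂ) hwexp
    simp only [map_mul, Complex.conj_ofReal, ← Complex.exp_conj, Complex.conj_I] at h
    rw [hw] at h
    simp only [map_add, map_mul, Complex.conj_ofReal, Complex.conj_I] at h
    rw [show ((A : ℂ) - B * Complex.I) = (A : ℂ) + (B : ℂ) * -Complex.I by ring, ← h]
    ring_nf
  have hz : Complex.exp (θ * Complex.I) = Complex.exp (-(2 * φ) * Complex.I) := by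
    rw [← hθ, hconj, ← hwexp]
    rw [mul_div_mul_left _ _ (by exact_mod_cast hrpos.ne')]
    rw [← Complex.exp_sub]
    ring_nf
  have hone : Complex.exp ((↑(θ + 2 * φ) : ℂ) * Complex.I) = 1 := by
    have h2 : Complex.exp ((θ : ℂ) * Complex.I) * Complex.exp (((2 * φ : ℝ) : ℂ) * Complex.I) = 1 := by
      rw [hz, ← Complex.exp_add]
      push_cast
      rw [show -(2 * (φ : ℂ)) * Complex.I + 2 * (φ : ℂ) * Complex.I = 0 by ring,
        Complex.exp_zero]
    rw [← h2, ← Complex.exp_add]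
    congr 1
    push_cast
    ring
  obtain ⟨n, hn⟩ := Complex.exp_eq_one_iff.mp hone
  have hn' : θ + 2 * φ = n * (2 * π) := by
    have := congrArg Complex.im hn
    simpa using this
  have hnn : (n : ℝ) = 1 := by
    have h1 : 0 < (n : ℝ) := by nlinarith
    have h2 : (n : ℝ) < 2 := by nlinarith
    have h1' : 0 < n := by exact_mod_cast h1
    have h2' : n < 2 := by exact_mod_cast h2
    have : n = 1 := by omega
    exact_mod_cast congrArg (Int.cast : ℤ → ℝ) this
  have hθval : θ = 2 * π - 2 * φ := by
    rw [hnn] at hn'; linarith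
  constructor
  · rw [lt_div_iff₀ (by positivity)]
    nlinarith
  · rw [div_lt_one (by positivity)]
    exact hθ2π
end

section
/- Let 0 < μ < 1, 0 < α, β < 1 with α + β = 1, A = α − β cos(μπ), B = β sin(μπ), and let θ ∈ (0, 2π) satisfy (A − iB)/(A + iB) = e^{iθ}. Then α/β = sin((θ − 2μπ)/2) / sin(θ/2). -/
open Real

theorem alpha_beta_ratio_of_theta (μ α β θ : ℝ)
    (hμ : 0 < μ ∧ μ < 1) (hα : 0 < α ∧ α < 1) (hβ : 0 < β ∧ β < 1)
    (hαβ : α + β = 1)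
    (A : ℝ) (hA : A = α - β * Real.cos (μ * π))
    (B : ℝ) (hB : B = β * Real.sin (μ * π))
    (hθ0 : 0 < θ) (hθ2π : θ < 2 * π)
    (hθ : ((A : ℂ) - B * Complex.I) / ((A : ℂ) + B * Complex.I)
        = Complex.exp (θ * Complex.I)) :
    α / β = Real.sin ((θ - 2 * μ * π) / 2) / Real.sin (θ / 2) := by
  obtain ⟨hμ0, hμ1⟩ := hμ
  obtain ⟨hβ0, hβ1⟩ := hβ
  have hsin : 0 < Real.sin (μ * π) := by
    apply Real.sin_pos_of_pos_of_lt_pi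
    · positivity
    · nlinarith [Real.pi_pos]
  have hBpos : 0 < B := by rw [hB]; positivity
  have hden : ((A : ℂ) + B * Complex.I) ≠ 0 := by
    intro h
    have := congrArg Complex.im h
    simp at this
    linarith
  have hmul : ((A : ℂ) - B * Complex.I)
      = Complex.exp (θ * Complex.I) * ((A : ℂ) + B * Complex.I) := by
    field_simp at hθ
    rw [mul_comm (θ : ℂ) Complex.I]
    linear_combination hθ
  have hre : A = Real.cos θ * A - Real.sin θ * B := by
    have := congrArg Complex.re hmul
    simpa [Complex.ext_iff, Complex.exp_re, Complex.exp_im, Complex.mul_re,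
      Complex.mul_im] using this
  have hs : 0 < Real.sin (θ / 2) := by
    apply Real.sin_pos_of_pos_of_lt_pi <;> linarith
  have h2 : 2 * (θ / 2) = θ := by ring
  have e1 := Real.cos_two_mul (θ / 2)
  have e2 := Real.sin_sq_add_cos_sq (θ / 2)
  have e3 := Real.sin_two_mul (θ / 2)
  rw [h2] at e1 e3
  have hcos2 : Real.cos θ = 1 - 2 * Real.sin (θ / 2) ^ 2 := by nlinarith [e1, e2]
  rw [hcos2, e3] at hre
  have h1 : Real.sin (θ / 2) * (2 * (A * Real.sin (θ / 2) + B * Real.cos (θ / 2))) = 0 := by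
    linear_combination hre
  have key : A * Real.sin (θ / 2) + B * Real.cos (θ / 2) = 0 := by
    rcases mul_eq_zero.mp h1 with h | h
    · linarith
    · linarith
  have hexp : Real.sin ((θ - 2 * μ * π) / 2)
      = Real.sin (θ / 2) * Real.cos (μ * π) - Real.cos (θ / 2) * Real.sin (μ * π) := by
    have : (θ - 2 * μ * π) / 2 = θ / 2 - μ * π := by ring
    rw [this, Real.sin_sub]
  rw [hexp]
  rw [div_eq_div_iff (by linarith : β ≠ 0) (ne_of_gt hs)]
  subst hA hB
  linear_combination key
end

section
/- Let a < b, and let g : [a,b] → ℝ be Hölder continuous with exponent k ∈ (0,1] and satisfy g(a) = 0. Then for any 0 < μ < k and any 0 < l < k − μ, the function h(x) = g(x)/(x−a)^μ (with h(a) defined as 0) is Hölder continuous with exponent l on [a,b] and satisfies h(a) = 0. -/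
lemma rpow_le_max1 (t D e : ℝ) (ht : 0 < t) (htD : t ≤ D) (he : 0 ≤ e) :
    t ^ e ≤ max 1 (D ^ e) := by
  rcases le_total t 1 with h|h
  · exact le_trans (Real.rpow_le_one ht.le h he) (le_max_left _ _)
  · exact le_trans (Real.rpow_le_rpow ht.le htD he) (le_max_right _ _)

set_option maxHeartbeats 1000000 in
lemma main_case (a b k μ l C : ℝ)
    (hk0 : 0 < k) (hk1 : k ≤ 1) (g : ℝ → ℝ)
    (hμ0 : 0 < μ) (hμk : μ < k) (hl0 : 0 < l) (hlk : l < k - μ) (hC : 0 ≤ C)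
    (x y : ℝ) (hay : a < y) (hyx : y < x) (hxb : x ≤ b)
    (hgd : |g x - g y| ≤ C * (x - y) ^ k)
    (hgy : |g y| ≤ C * (y - a) ^ k) :
    |g x / (x - a) ^ μ - g y / (y - a) ^ μ| ≤
      2 * C * max 1 ((b - a) ^ (k - μ - l)) * (x - y) ^ l := by
  set M := max 1 ((b - a) ^ (k - μ - l)) with hM
  have hM1 : (1:ℝ) ≤ M := le_max_left _ _
  set t := y - a with htdef
  set δ := x - y with hδdef
  have ht : 0 < t := by simp only [htdef]; linarith
  have hδ : 0 < δ := by simp only [hδdef]; linarith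
  have htb : t ≤ b - a := by simp only [htdef]; linarith
  have hδb : δ ≤ b - a := by simp only [hδdef]; linarith
  have hl1 : l < 1 := by linarith
  have hxa : x - a = t + δ := by ring
  have hQ : (0:ℝ) < t ^ μ := Real.rpow_pos_of_pos ht μ
  have hP : (0:ℝ) < (t + δ) ^ μ := Real.rpow_pos_of_pos (by linarith) μ
  have hQP : t ^ μ ≤ (t + δ) ^ μ := Real.rpow_le_rpow ht.le (by linarith) hμ0.le
  have hδl : (0:ℝ) < δ ^ l := Real.rpow_pos_of_pos hδ l
  have hMle : t ^ (k - μ - l) ≤ M := rpow_le_max1 t (b - a) _ ht htb (by linarith)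
  have hMleδ : δ ^ (k - μ - l) ≤ M := rpow_le_max1 δ (b - a) _ hδ hδb (by linarith)
  -- splitting
  have split : |g x / (x - a) ^ μ - g y / (y - a) ^ μ| ≤
      |g x - g y| / (t + δ) ^ μ + |g y| * (1 / t ^ μ - 1 / (t + δ) ^ μ) := by
    rw [hxa, htdef]
    have heq : g x / (t + δ) ^ μ - g y / t ^ μ
        = (g x - g y) / (t + δ) ^ μ + g y * (1 / (t + δ) ^ μ - 1 / t ^ μ) := by
      field_simp; ring
    rw [heq]
    refine (abs_add_le _ _).trans ?_
    rw [abs_div, abs_of_pos hP, abs_mul]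
    gcongr
    rw [abs_sub_comm, abs_of_nonneg
      (sub_nonneg.2 (one_div_le_one_div_of_le hQ hQP))]
  have hinv : (0:ℝ) ≤ 1 / t ^ μ - 1 / (t + δ) ^ μ :=
    sub_nonneg.2 (one_div_le_one_div_of_le hQ hQP)
  -- key bound on inverse difference
  have h1 : t * (t + δ) ^ μ ≤ t ^ μ * (t + δ) := by
    have h1a : t / (t + δ) ≤ t ^ μ / (t + δ) ^ μ := by
      rw [← Real.div_rpow ht.le (by positivity)]
      calc t / (t + δ) = (t / (t + δ)) ^ (1:ℝ) := (Real.rpow_one _).symm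
        _ ≤ (t / (t + δ)) ^ μ := Real.rpow_le_rpow_of_exponent_ge (by positivity)
              ((div_le_one (by positivity)).2 (by linarith)) (by linarith)
    rw [div_le_div_iff₀ (by positivity) hP] at h1a
    exact h1a
  have hB : 1 / t ^ μ - 1 / (t + δ) ^ μ ≤ δ / ((t + δ) * t ^ μ) := by
    rw [div_sub_div _ _ hQ.ne' hP.ne', div_le_div_iff₀ (by positivity) (by positivity)]
    nlinarith [mul_le_mul_of_nonneg_left h1 hQ.le]
  have hstep1 : |g y| * (1 / t ^ μ - 1 / (t + δ) ^ μ)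
      ≤ (C * t ^ k) * (δ / ((t + δ) * t ^ μ)) :=
    mul_le_mul hgy hB hinv (by positivity)
  -- case split
  rcases le_total δ t with hcase | hcase
  · -- δ ≤ t
    have hA : |g x - g y| / (t + δ) ^ μ ≤ C * M * δ ^ l := by
      calc |g x - g y| / (t + δ) ^ μ ≤ C * δ ^ k / t ^ μ :=
            div_le_div₀ (by positivity) hgd hQ hQP
        _ ≤ C * (δ ^ l * t ^ (k - l)) / t ^ μ := by
            have hnum : C * δ ^ k ≤ C * (δ ^ l * t ^ (k - l)) := by
              have e1 : δ ^ k = δ ^ l * δ ^ (k - l) := by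
                rw [← Real.rpow_add hδ]; congr 1; ring
              rw [e1]
              exact mul_le_mul_of_nonneg_left (mul_le_mul_of_nonneg_left
                (Real.rpow_le_rpow hδ.le hcase (by linarith)) hδl.le) hC
            exact div_le_div₀ (by positivity) hnum hQ le_rfl
        _ = C * δ ^ l * t ^ (k - μ - l) := by
            have e : t ^ (k - l) = t ^ (k - μ - l) * t ^ μ := by
              rw [← Real.rpow_add ht]; congr 1; ring
            rw [e]; field_simp
        _ ≤ C * δ ^ l * M :=
            mul_le_mul_of_nonneg_left hMle (by positivity)
        _ = C * M * δ ^ l := by ring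
    have hBB : |g y| * (1 / t ^ μ - 1 / (t + δ) ^ μ) ≤ C * M * δ ^ l := by
      calc |g y| * (1 / t ^ μ - 1 / (t + δ) ^ μ)
          ≤ (C * t ^ k) * (δ / ((t + δ) * t ^ μ)) := hstep1
        _ ≤ (C * t ^ k) * (δ / (t * t ^ μ)) := by
            refine mul_le_mul_of_nonneg_left ?_ (by positivity)
            exact div_le_div_of_nonneg_left hδ.le (by positivity)
              (by nlinarith [hQ])
        _ = C * δ * t ^ (k - μ - 1) := by
            rw [show t * t ^ μ = t ^ ((1:ℝ) + μ) by
              rw [Real.rpow_add ht, Real.rpow_one],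
              show k - μ - 1 = k - (1 + μ) by ring, Real.rpow_sub ht]
            ring
        _ = C * (δ ^ l * δ ^ (1 - l)) * t ^ (k - μ - 1) := by
            rw [← Real.rpow_add hδ, show l + (1 - l) = (1:ℝ) by ring, Real.rpow_one]
        _ ≤ C * (δ ^ l * t ^ (1 - l)) * t ^ (k - μ - 1) := by
            refine mul_le_mul_of_nonneg_right (mul_le_mul_of_nonneg_left
              (mul_le_mul_of_nonneg_left
                (Real.rpow_le_rpow hδ.le hcase (by linarith)) hδl.le) hC)
              (Real.rpow_pos_of_pos ht _).le
        _ = C * δ ^ l * t ^ (k - μ - l) := by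
            rw [show k - μ - l = (1 - l) + (k - μ - 1) by ring, Real.rpow_add ht]
            ring
        _ ≤ C * δ ^ l * M := mul_le_mul_of_nonneg_left hMle (by positivity)
        _ = C * M * δ ^ l := by ring
    calc |g x / (x - a) ^ μ - g y / (y - a) ^ μ| ≤ _ := split
      _ ≤ C * M * δ ^ l + C * M * δ ^ l := add_le_add hA hBB
      _ = 2 * C * M * δ ^ l := by ring
  · -- t ≤ δ
    have hA : |g x - g y| / (t + δ) ^ μ ≤ C * M * δ ^ l := by
      have hPδ : δ ^ μ ≤ (t + δ) ^ μ := Real.rpow_le_rpow hδ.le (by linarith) hμ0.le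
      calc |g x - g y| / (t + δ) ^ μ ≤ C * δ ^ k / δ ^ μ :=
            div_le_div₀ (by positivity) hgd (Real.rpow_pos_of_pos hδ μ) hPδ
        _ = C * (δ ^ (k - μ - l) * δ ^ l) := by
            rw [← Real.rpow_add hδ, show k - μ - l + l = k - μ by ring,
              Real.rpow_sub hδ, mul_div_assoc]
        _ ≤ C * (M * δ ^ l) := mul_le_mul_of_nonneg_left
            (mul_le_mul_of_nonneg_right hMleδ hδl.le) hC
        _ = C * M * δ ^ l := by ring
    have hBB : |g y| * (1 / t ^ μ - 1 / (t + δ) ^ μ) ≤ C * M * δ ^ l := by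
      calc |g y| * (1 / t ^ μ - 1 / (t + δ) ^ μ)
          ≤ (C * t ^ k) * (δ / ((t + δ) * t ^ μ)) := hstep1
        _ ≤ (C * t ^ k) * (1 / t ^ μ) := by
            refine mul_le_mul_of_nonneg_left ?_ (by positivity)
            rw [div_le_div_iff₀ (by positivity) hQ]
            nlinarith [hQ, mul_pos ht hQ]
        _ = C * t ^ (k - μ) := by rw [Real.rpow_sub ht]; ring
        _ ≤ C * δ ^ (k - μ) := mul_le_mul_of_nonneg_left
            (Real.rpow_le_rpow ht.le hcase (by linarith)) hC
        _ = C * (δ ^ (k - μ - l) * δ ^ l) := by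
            rw [← Real.rpow_add hδ, show k - μ - l + l = k - μ by ring]
        _ ≤ C * (M * δ ^ l) := mul_le_mul_of_nonneg_left
            (mul_le_mul_of_nonneg_right hMleδ hδl.le) hC
        _ = C * M * δ ^ l := by ring
    calc |g x / (x - a) ^ μ - g y / (y - a) ^ μ| ≤ _ := split
      _ ≤ C * M * δ ^ l + C * M * δ ^ l := add_le_add hA hBB
      _ = 2 * C * M * δ ^ l := by ring


theorem holder_div_power (a b k μ l : ℝ) (hab : a < b)
    (hk0 : 0 < k) (hk1 : k ≤ 1) (g : ℝ → ℝ) (C : ℝ)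
    (hg : ∀ x ∈ Set.Icc a b, ∀ y ∈ Set.Icc a b, |g x - g y| ≤ C * |x - y| ^ k)
    (hga : g a = 0) (hμ0 : 0 < μ) (hμk : μ < k) (hl0 : 0 < l) (hlk : l < k - μ) :
    ∃ C' : ℝ, 0 ≤ C' ∧
      (∀ x ∈ Set.Icc a b, ∀ y ∈ Set.Icc a b,
        |g x / (x - a) ^ μ - g y / (y - a) ^ μ| ≤ C' * |x - y| ^ l) ∧
      g a / (a - a) ^ μ = 0 := by
  have hC : 0 ≤ C := by
    have h1 := hg a ⟨le_refl a, hab.le⟩ b ⟨hab.le, le_refl b⟩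
    have h2 : (0:ℝ) < |a - b| ^ k :=
      Real.rpow_pos_of_pos (abs_pos.2 (sub_ne_zero.2 hab.ne)) k
    nlinarith [abs_nonneg (g a - g b)]
  set M := max 1 ((b - a) ^ (k - μ - l)) with hM
  have hM1 : (1:ℝ) ≤ M := le_max_left _ _
  have hM0 : (0:ℝ) ≤ M := by linarith
  refine ⟨2 * C * M, by positivity, ?_, by rw [hga]; exact zero_div _⟩
  have key : ∀ x ∈ Set.Icc a b, ∀ y ∈ Set.Icc a b, y ≤ x →
      |g x / (x - a) ^ μ - g y / (y - a) ^ μ| ≤ 2 * C * M * (x - y) ^ l := by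
    rintro x ⟨hax, hxb⟩ y ⟨hay, hyb⟩ hyx
    rcases eq_or_lt_of_le hay with h | h
    · -- y = a
      subst h
      rw [hga, zero_div, sub_zero]
      rcases eq_or_lt_of_le hax with h2 | h2
      · rw [← h2, hga, zero_div, abs_zero, sub_self, Real.zero_rpow hl0.ne', mul_zero]
      · have hxa0 : (0:ℝ) < x - a := sub_pos.2 h2
        have hgx : |g x| ≤ C * (x - a) ^ k := by
          have h3 := hg x ⟨hax, hxb⟩ a ⟨le_refl a, hab.le⟩
          rwa [hga, sub_zero, abs_of_pos hxa0] at h3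
        have hPμ : (0:ℝ) < (x - a) ^ μ := Real.rpow_pos_of_pos hxa0 μ
        rw [abs_div, abs_of_pos hPμ, div_le_iff₀ hPμ]
        have e : (x - a) ^ k = (x - a) ^ (k - μ - l) * ((x - a) ^ l * (x - a) ^ μ) := by
          rw [← Real.rpow_add hxa0, ← Real.rpow_add hxa0]; congr 1; ring
        have hMle : (x - a) ^ (k - μ - l) ≤ M :=
          rpow_le_max1 _ _ _ hxa0 (by linarith) (by linarith)
        calc |g x| ≤ C * (x - a) ^ k := hgx
          _ = (C * (x - a) ^ (k - μ - l)) * ((x - a) ^ l * (x - a) ^ μ) := by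
              rw [e]; ring
          _ ≤ (C * M) * ((x - a) ^ l * (x - a) ^ μ) :=
              mul_le_mul_of_nonneg_right (mul_le_mul_of_nonneg_left hMle hC)
                (by positivity)
          _ ≤ (2 * C * M) * ((x - a) ^ l * (x - a) ^ μ) := by
              nlinarith [mul_nonneg (mul_nonneg hC hM0)
                (mul_nonneg (Real.rpow_pos_of_pos hxa0 l).le hPμ.le)]
          _ = 2 * C * M * (x - a) ^ l * (x - a) ^ μ := by ring
    · rcases eq_or_lt_of_le hyx with h2 | h2
      · simp [h2, sub_self, Real.zero_rpow hl0.ne']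
      · have hgd : |g x - g y| ≤ C * (x - y) ^ k := by
          have h3 := hg x ⟨hax, hxb⟩ y ⟨hay, hyb⟩
          rwa [abs_of_pos (sub_pos.2 h2)] at h3
        have hgy : |g y| ≤ C * (y - a) ^ k := by
          have h3 := hg y ⟨hay, hyb⟩ a ⟨le_refl a, hab.le⟩
          rwa [hga, sub_zero, abs_of_pos (sub_pos.2 h)] at h3
        exact main_case a b k μ l C hk0 hk1 g hμ0 hμk hl0 hlk hC x y h h2 hxb hgd hgy
  intro x hx y hy
  rcases le_total y x with h | h
  · rw [abs_of_nonneg (sub_nonneg.2 h)]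
    exact key x hx y hy h
  · rw [abs_sub_comm (g x / (x - a) ^ μ), abs_sub_comm x y,
      abs_of_nonneg (sub_nonneg.2 h)]
    exact key y hy x hx h
end
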